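/- If a sequence of nonzero rationals satisfies a_n a_{n-4} = a_{n-1}a_{n-3} + a_{n-2}² for n ≥ 4, with a_0 = a_1 = a_2 = a_3 = 1, then F(a_{n-1}, a_n, a_{n+1}, a_{n+2}) = 0 for all n ≥ 1, where F(a,b,c,d) = a²d² - 4abcd + ac³ + b³d + b²c². -/
import Mathlib


/-- The quartic polynomial from the Somos-4 analysis. -/
def somosF (a b c d : ℚ) : ℚ := a^2*d^2 - 4*a*b*c*d + a*c^3 + b^3*d + b^2*c^2

lemma somosF_step (a b c d e : ℚ) (ha : a ≠ 0) (h : e * a = d * b + c ^ 2)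
    (hF : somosF a b c d = 0) : somosF b c d e = 0 := by
  have key : a ^ 2 * somosF b c d e = e * a * somosF a b c d := by
    unfold somosF
    linear_combination (a * b ^ 2 * e - a ^ 2 * d ^ 2) * h
  have h2 : a ^ 2 * somosF b c d e = 0 := by rw [key, hF]; ring
  have := pow_ne_zero 2 ha
  exact (mul_eq_zero.mp h2).resolve_left this

/-- For the Somos-4 sequence (with initial values `1,1,1,1`, all terms nonzero),
`F(a (n-1), a n, a (n+1), a (n+2)) = 0` for all `n ≥ 1`. -/
theorem somos_F_vanishes (a : ℕ → ℚ) (hne : ∀ n, a n ≠ 0)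
    (h0 : a 0 = 1) (h1 : a 1 = 1) (h2 : a 2 = 1) (h3 : a 3 = 1)
    (hrec : ∀ n, a (n + 4) * a n = a (n + 3) * a (n + 1) + a (n + 2) ^ 2) :
    ∀ n, somosF (a n) (a (n + 1)) (a (n + 2)) (a (n + 3)) = 0 := by
  intro n
  induction n with
  | zero => simp [somosF, h0, h1, h2, h3]; ring
  | succ k ih =>
      exact somosF_step _ _ _ _ _ (hne k) (hrec k) ih
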